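/- Let X, Y be Hilbert spaces and b : X × Y → ℝ a continuous bilinear form satisfying the inf-sup condition with constant α > 0. Then the operator B^t : Y → (Ker B)^0 ⊆ X', defined by ⟨B^t λ, v⟩ = b(v, λ), is a linear isomorphism from Y onto the annihilator of Ker B. -/

import Mathlib

open InnerProductSpace

theorem stmt2
    {X Y : Type*} [NormedAddCommGroup X] [InnerProductSpace ℝ X] [CompleteSpace X]
    [NormedAddCommGroup Y] [InnerProductSpace ℝ Y] [CompleteSpace Y]
    (b : X → Y → ℝ)
    (hb_lin₁ : ∀ v, IsLinearMap ℝ (b v))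
    (hb_lin₂ : ∀ μ, IsLinearMap ℝ (fun v => b v μ))
    (Mb : ℝ) (hb_cont : ∀ v μ, |b v μ| ≤ Mb * ‖v‖ * ‖μ‖)
    (B : X →L[ℝ] (Y →L[ℝ] ℝ)) (hB : ∀ v μ, B v μ = b v μ)
    (Bt : Y →L[ℝ] (X →L[ℝ] ℝ)) (hBt : ∀ μ v, Bt μ v = b v μ)
    (α : ℝ) (hα : 0 < α)
    (hinfsup : ∀ μ : Y,
      ‖μ‖ ≤ α⁻¹ * ⨆ v : {v : X // v ≠ 0}, b v μ / ‖(v : X)‖) :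
    Function.Injective Bt ∧
    Set.range Bt = {l : X →L[ℝ] ℝ | ∀ v : X, B v = 0 → l v = 0} ∧
    (∀ μ : Y, ‖μ‖ ≤ α⁻¹ * ‖Bt μ‖) := by
  have hαinv : (0:ℝ) < α⁻¹ := inv_pos.2 hα
  -- (3) norm bound
  have hnorm : ∀ μ : Y, ‖μ‖ ≤ α⁻¹ * ‖Bt μ‖ := by
    intro μ
    refine (hinfsup μ).trans (mul_le_mul_of_nonneg_left ?_ hαinv.le)
    refine Real.iSup_le (fun v => ?_) (norm_nonneg _)
    have hv : (0:ℝ) < ‖(v : X)‖ := norm_pos_iff.2 v.2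
    rw [div_le_iff₀ hv, ← hBt μ v]
    exact (le_abs_self _).trans ((Bt μ).le_opNorm v)
  -- injectivity
  have hinj : Function.Injective Bt := by
    intro μ₁ μ₂ h
    have h0 : Bt (μ₁ - μ₂) = 0 := by rw [map_sub, h, sub_self]
    have := hnorm (μ₁ - μ₂)
    rw [h0, norm_zero, mul_zero] at this
    have : μ₁ - μ₂ = 0 := norm_le_zero_iff.1 this
    exact sub_eq_zero.1 this
  refine ⟨hinj, ?_, hnorm⟩
  -- Riesz representatives
  set eX := InnerProductSpace.toDual ℝ X with heX
  set eY := InnerProductSpace.toDual ℝ Y with heY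
  set S : Y →L[ℝ] X :=
    (eX.symm.toContinuousLinearEquiv : (X →L[ℝ] ℝ) ≃L[ℝ] X).toContinuousLinearMap.comp Bt
    with hS
  set T : X →L[ℝ] Y :=
    (eY.symm.toContinuousLinearEquiv : (Y →L[ℝ] ℝ) ≃L[ℝ] Y).toContinuousLinearMap.comp B
    with hT
  have hSapp : ∀ μ, S μ = eX.symm (Bt μ) := fun μ => rfl
  have hTapp : ∀ v, T v = eY.symm (B v) := fun v => rfl
  have hSinner : ∀ (μ : Y) (v : X), ⟪S μ, v⟫_ℝ = b v μ := by
    intro μ v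
    rw [hSapp, toDual_symm_apply, hBt]
  have hTinner : ∀ (v : X) (μ : Y), ⟪T v, μ⟫_ℝ = b v μ := by
    intro v μ
    rw [hTapp, toDual_symm_apply, hB]
  have hSnorm : ∀ μ, ‖S μ‖ = ‖Bt μ‖ := fun μ => eX.symm.norm_map _
  -- range S is closed
  have hanti : AntilipschitzWith ⟨α⁻¹, hαinv.le⟩ S := by
    refine S.antilipschitz_of_bound fun μ => ?_
    rw [hSnorm]
    exact hnorm μ
  have hclosed : IsClosed ((LinearMap.range (S : Y →ₗ[ℝ] X) : Submodule ℝ X) : Set X) := by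
    rw [LinearMap.coe_range]
    exact hanti.isClosed_range S.uniformContinuous
  -- ker T = (range S)ᗮ
  have hker : LinearMap.ker (T : X →ₗ[ℝ] Y) = (LinearMap.range (S : Y →ₗ[ℝ] X))ᗮ := by
    ext v
    rw [LinearMap.mem_ker, Submodule.mem_orthogonal]
    constructor
    · rintro h u ⟨μ, rfl⟩
      rw [ContinuousLinearMap.coe_coe] at h ⊢
      rw [hSinner μ v, ← hTinner v μ, h, inner_zero_left]
    · intro h
      have h2 : ⟪T v, T v⟫_ℝ = 0 := by
        rw [hTinner v (T v), ← hSinner (T v) v]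
        exact h (S (T v)) ⟨T v, rfl⟩
      exact inner_self_eq_zero.1 h2
  have hrange : (LinearMap.ker (T : X →ₗ[ℝ] Y))ᗮ = LinearMap.range (S : Y →ₗ[ℝ] X) := by
    rw [hker, Submodule.orthogonal_orthogonal_eq_closure,
      hclosed.submodule_topologicalClosure_eq]
  -- conclude
  ext l
  simp only [Set.mem_range, Set.mem_setOf_eq]
  constructor
  · rintro ⟨μ, rfl⟩ v hv
    have hTv : T v = 0 := by rw [hTapp, hv, map_zero]
    rw [hBt, ← hTinner v μ, hTv, inner_zero_left]
  · intro h
    have hmem : eX.symm l ∈ (LinearMap.ker (T : X →ₗ[ℝ] Y))ᗮ := by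
      rw [Submodule.mem_orthogonal]
      intro u hu
      have hBu : B u = 0 := by
        have : eY.symm (B u) = 0 := hTapp u ▸ hu
        simpa using eY.symm.injective (by simpa using this)
      rw [real_inner_comm, toDual_symm_apply]
      exact h u hBu
    rw [hrange] at hmem
    obtain ⟨μ, hμ⟩ := hmem
    refine ⟨μ, ?_⟩
    have : eX.symm (Bt μ) = eX.symm l := by rw [← hSapp]; exact hμ
    exact eX.symm.injective this
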